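/- Define P_{s₀}(Y = ỹ) = ∑_{z̃ ∈ Ωⁿ_{s₀}, Y(z̃) = ỹ} Pⁿ_{s₀}(z̃) for ỹ ∈ Σⁿ. Then P_{s₀}(Y = ε) = 1, and for ỹ = a₁ỹ₁ with a₁ ∈ Σ the fixpoint equation P_{s₀}(Y = ỹ) = ∑_{s₁ ∈ S} δ(s₀)(a₁, s₁) · P_{s₁}(Y = ỹ₁) + ∑_{s₁ ∈ S} δ(s₀)(ε, s₁) · P_{s₁}(Y = ỹ) holds. -/

import Mathlib

open scoped ENNReal

/-- A Hidden Markov Model with ε-transitions: a finite state space `S`, a finite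
alphabet `A`, and for each state a probability function on `(Σ ∪ {ε}) × S`,
where `ε` is modelled by `none`. -/
structure HMMeps (S A : Type*) [Fintype S] [Fintype A] where
  δ : S → Option A × S → ℝ≥0∞
  sum_one : ∀ s : S, ∑ p : Option A × S, δ s p = 1

namespace HMMeps

variable {S A : Type*} [Fintype S] [Fintype A]

/-- The probability of an alternating sequence `s₀ a₁ s₁ … a_m s_m`, represented by
its start state `s₀` together with the list of steps `[(a₁,s₁),…,(a_m,s_m)]`:
the product of the transition probabilities. -/
noncomputable def pathProb (M : HMMeps S A) : S → List (Option A × S) → ℝ≥0∞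
  | _, [] => 1
  | s, p :: rest => M.δ s p * M.pathProb p.2 rest

/-- The observable projection `Y`: the sequence of observable symbols
(ε's and states removed). -/
def obsSeq (z : List (Option A × S)) : List A := z.filterMap Prod.fst

/-- The last state `L` of a sequence starting in `s₀`. -/
def lastState (s₀ : S) (z : List (Option A × S)) : S :=
  (z.getLast?.map Prod.snd).getD s₀

/-- The sample space `Ωⁿ_{s₀} = s₀((εS)*ΣS)ⁿ`: alternating sequences containing
exactly `n` observable symbols whose second-to-last element (i.e. the symbol of the
last transition) is observable.  (The start state is kept separately, so an element
of the sample space is just the list of steps.) -/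
def Omega (S A : Type*) (n : ℕ) : Set (List (Option A × S)) :=
  {z | (obsSeq z).length = n ∧ ∀ p ∈ z.getLast?, (Prod.fst p).isSome = true}

end HMMeps

namespace HMMeps

/-- `P_{s₀}(Y = ỹ)`: the probability of observing `ỹ` starting from `s₀`, i.e.
the sum of the probabilities of all `z̃ ∈ Ωⁿ_{s₀}` (with `n = |ỹ|`) whose
observable projection is `ỹ`. -/
noncomputable def Pobs {S A : Type*} [Fintype S] [Fintype A]
    (M : HMMeps S A) (s₀ : S) (ys : List A) : ℝ≥0∞ :=
  ∑' z : {z : List (Option A × S) // z ∈ Omega S A ys.length ∧ obsSeq z = ys},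
    M.pathProb s₀ z.1

section Aux

variable {S A : Type*} [Fintype S] [Fintype A]

/-- The condition `z̃ ∈ Ωⁿ_{s₀} ∧ Y(z̃) = ỹ`, restated. -/
def Cond (ys : List A) (z : List (Option A × S)) : Prop :=
  obsSeq z = ys ∧ ∀ p ∈ z.getLast?, (Prod.fst p).isSome = true

lemma mem_iff_cond (z : List (Option A × S)) (ys : List A) :
    (z ∈ Omega S A ys.length ∧ obsSeq z = ys) ↔ Cond ys z := by
  constructor
  · rintro ⟨⟨-, h2⟩, h3⟩; exact ⟨h3, h2⟩
  · rintro ⟨h1, h2⟩; exact ⟨⟨by rw [h1], h2⟩, h1⟩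

open scoped Classical in
lemma Pobs_eq_tsum (M : HMMeps S A) (s : S) (ys : List A) :
    Pobs M s ys = ∑' z : List (Option A × S),
      if Cond ys z then M.pathProb s z else 0 := by
  have h : Pobs M s ys
      = ∑' x : ({z : List (Option A × S) | z ∈ Omega S A ys.length ∧ obsSeq z = ys} : Set _),
        M.pathProb s x := rfl
  rw [h, tsum_subtype]
  refine tsum_congr fun z => ?_
  rw [Set.indicator_apply]
  simp only [Set.mem_setOf_eq]
  exact if_congr (mem_iff_cond z ys) rfl rfl

lemma tsum_list {α : Type*} (f : List α → ℝ≥0∞) :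
    ∑' l : List α, f l = f [] + ∑' p : α × List α, f (p.1 :: p.2) := by
  rw [ENNReal.tsum_eq_add_tsum_ite ([] : List α)]
  congr 1
  have hinj : Function.Injective (fun p : α × List α => p.1 :: p.2) := by
    rintro ⟨a, l⟩ ⟨b, m⟩ h
    simp only [List.cons.injEq] at h
    simp [h.1, h.2]
  rw [← hinj.tsum_eq ?_]
  · exact tsum_congr fun p => by simp
  · intro l hl
    rw [Function.mem_support] at hl
    match l with
    | [] => simp at hl
    | h :: t => exact ⟨(h, t), rfl⟩

lemma obsSeq_cons_some (a : A) (s₁ : S) (l : List (Option A × S)) :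
    obsSeq (((some a, s₁) : Option A × S) :: l) = a :: obsSeq l := by
  simp [obsSeq, List.filterMap_cons]

lemma obsSeq_cons_none (s₁ : S) (l : List (Option A × S)) :
    obsSeq (((none, s₁) : Option A × S) :: l) = obsSeq l := by
  simp [obsSeq, List.filterMap_cons]

lemma cond_none_cons (a₁ : A) (y₁ : List A) (s₁ : S) (rest : List (Option A × S)) :
    Cond (a₁ :: y₁) (((none, s₁) : Option A × S) :: rest) ↔ Cond (a₁ :: y₁) rest := by
  unfold Cond
  rw [obsSeq_cons_none]
  match rest with
  | [] => simp [obsSeq]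
  | h :: t => rw [List.getLast?_cons_cons]

lemma cond_some_cons (a : A) (a₁ : A) (y₁ : List A) (s₁ : S) (rest : List (Option A × S)) :
    Cond (a₁ :: y₁) (((some a, s₁) : Option A × S) :: rest) ↔ (a = a₁ ∧ Cond y₁ rest) := by
  unfold Cond
  rw [obsSeq_cons_some]
  match rest with
  | [] =>
    simp only [List.cons.injEq, List.getLast?_singleton, Option.mem_def, Option.some.injEq,
      forall_eq', Option.isSome_some, and_true, List.getLast?_nil, reduceCtorEq, false_implies,
      implies_true, and_assoc]
  | h :: t =>
    rw [List.getLast?_cons_cons]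
    simp only [List.cons.injEq, and_assoc]

end Aux

/-- `P_{s₀}(Y = ε) = 1` and, for `ỹ = a₁ỹ₁`, the fixpoint equation
`P_{s₀}(Y=ỹ) = ∑_{s₁} δ(s₀)(a₁,s₁)·P_{s₁}(Y=ỹ₁) + ∑_{s₁} δ(s₀)(ε,s₁)·P_{s₁}(Y=ỹ)`
holds. -/
theorem Pobs_recursion {S A : Type*} [Fintype S] [Fintype A]
    (M : HMMeps S A) (s₀ : S) (a₁ : A) (y₁ : List A) :
    Pobs M s₀ [] = 1 ∧
    Pobs M s₀ (a₁ :: y₁)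
      = (∑ s₁ : S, M.δ s₀ (some a₁, s₁) * Pobs M s₁ y₁)
        + ∑ s₁ : S, M.δ s₀ (none, s₁) * Pobs M s₁ (a₁ :: y₁) := by
  classical
  constructor
  · rw [Pobs_eq_tsum]
    rw [tsum_eq_single ([] : List (Option A × S))]
    · simp [Cond, obsSeq, pathProb]
    · intro z hz
      rw [if_neg]
      rintro ⟨h1, h2⟩
      have hlast := h2 _ (List.getLast?_eq_getLast hz)
      have hnone := List.filterMap_eq_nil_iff.mp h1 _ (List.getLast_mem hz)
      rw [hnone] at hlast
      simp at hlast
  · rw [Pobs_eq_tsum, tsum_list]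
    have h0 : (if Cond (a₁ :: y₁) ([] : List (Option A × S)) then M.pathProb s₀ [] else 0) = 0 := by
      rw [if_neg]; rintro ⟨h1, -⟩; simp [obsSeq] at h1
    rw [h0, zero_add, ENNReal.tsum_prod', tsum_fintype]
    have hnone : ∀ s₁ : S,
        (∑' rest : List (Option A × S),
          if Cond (a₁ :: y₁) ((none, s₁) :: rest) then M.pathProb s₀ ((none, s₁) :: rest) else 0)
        = M.δ s₀ (none, s₁) * Pobs M s₁ (a₁ :: y₁) := by
      intro s₁
      rw [Pobs_eq_tsum, ← ENNReal.tsum_mul_left]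
      refine tsum_congr fun rest => ?_
      by_cases h : Cond (a₁ :: y₁) rest
      · rw [if_pos ((cond_none_cons a₁ y₁ s₁ rest).mpr h), if_pos h]
        rfl
      · rw [if_neg (fun hc => h ((cond_none_cons a₁ y₁ s₁ rest).mp hc)), if_neg h, mul_zero]
    have hsome : ∀ (a : A) (s₁ : S),
        (∑' rest : List (Option A × S),
          if Cond (a₁ :: y₁) ((some a, s₁) :: rest) then M.pathProb s₀ ((some a, s₁) :: rest) else 0)
        = if a = a₁ then M.δ s₀ (some a₁, s₁) * Pobs M s₁ y₁ else 0 := by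
      intro a s₁
      by_cases ha : a = a₁
      · subst ha
        rw [if_pos rfl, Pobs_eq_tsum, ← ENNReal.tsum_mul_left]
        refine tsum_congr fun rest => ?_
        by_cases h : Cond y₁ rest
        · rw [if_pos ((cond_some_cons a a y₁ s₁ rest).mpr ⟨rfl, h⟩), if_pos h]
          rfl
        · rw [if_neg (fun hc => h ((cond_some_cons a a y₁ s₁ rest).mp hc).2), if_neg h, mul_zero]
      · rw [if_neg ha]
        calc (∑' rest : List (Option A × S),
              if Cond (a₁ :: y₁) ((some a, s₁) :: rest) then M.pathProb s₀ ((some a, s₁) :: rest) else 0)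
            = ∑' _ : List (Option A × S), (0 : ℝ≥0∞) :=
              tsum_congr fun rest =>
                if_neg (fun hc => ha ((cond_some_cons a a₁ y₁ s₁ rest).mp hc).1)
          _ = 0 := tsum_zero
    rw [Fintype.sum_prod_type, univ_option, Finset.sum_insertNone]
    simp only [hnone, hsome]
    rw [add_comm]
    congr 1
    rw [Finset.sum_comm]
    simp
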